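/- For every r > 0 and all u, w ∈ ℝ, λ(((ℋ ∩ {y ≥ r}) + u) Δ ((ℋ ∩ {y ≥ r}) + w)) ≤ 2|u − w|/r, where Δ denotes symmetric difference and A + s denotes the horizontal translate {(x+s, y) : (x,y) ∈ A}. -/

import Mathlib

open MeasureTheory

/-- The hyperbolic area measure on the upper half-plane: density `1/y²` w.r.t. Lebesgue. -/
noncomputable def hypMeasure : Measure (ℝ × ℝ) :=
  volume.withDensity (fun p => ENNReal.ofReal (1 / p.2 ^ 2))

/-- The set ℋ = {(x,y) : y > 0, |x| < 1/2, y ≥ (2/π)·tan(π|x|)}. -/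
def Hset : Set (ℝ × ℝ) :=
  {p | 0 < p.2 ∧ |p.1| < 1 / 2 ∧ (2 / Real.pi) * Real.tan (Real.pi * |p.1|) ≤ p.2}

/-- Horizontal translate of a subset of the plane. -/
def htrans (s : ℝ) (A : Set (ℝ × ℝ)) : Set (ℝ × ℝ) := (fun p => (p.1 + s, p.2)) '' A

open MeasureTheory Set Real

lemma measurable_tan' : Measurable Real.tan := by
  have : Real.tan = fun x => Real.sin x / Real.cos x := funext fun x => Real.tan_eq_sin_div_cos x
  rw [this]
  exact Real.continuous_sin.measurable.div Real.continuous_cos.measurable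

lemma measurableSet_Hset : MeasurableSet Hset := by
  unfold Hset
  apply MeasurableSet.inter
  · exact measurableSet_lt measurable_const measurable_snd
  apply MeasurableSet.inter
  · exact measurableSet_lt (measurable_fst.abs) measurable_const
  · exact measurableSet_le ((measurable_tan'.comp ((measurable_fst.abs).const_mul Real.pi)).const_mul _) measurable_snd
open MeasureTheory Set Real

lemma Hslice {y : ℝ} (hy : 0 < y) :
    {x : ℝ | (x, y) ∈ Hset} = Icc (-(arctan (Real.pi * y / 2) / Real.pi)) (arctan (Real.pi * y / 2) / Real.pi) := by
  have hπ : (0:ℝ) < Real.pi := Real.pi_pos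
  set c := arctan (Real.pi * y / 2) / Real.pi with hc
  have hcpos : 0 < c := div_pos ((by rw [← Real.arctan_zero]; exact Real.arctan_strictMono (by positivity))) hπ
  have hchalf : c < 1/2 := by
    rw [hc, div_lt_iff₀ hπ]
    calc arctan (Real.pi * y / 2) < Real.pi / 2 := Real.arctan_lt_pi_div_two _
    _ = 1/2 * Real.pi := by ring
  have key : ∀ x : ℝ, |x| < 1/2 → ((2 / Real.pi) * Real.tan (Real.pi * |x|) ≤ y ↔ |x| ≤ c) := by
    intro x hx
    have h1 : Real.pi * |x| < Real.pi / 2 := by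
      calc Real.pi * |x| < Real.pi * (1/2) := by
            exact mul_lt_mul_of_pos_left hx hπ
      _ = Real.pi / 2 := by ring
    have h0 : -(Real.pi/2) < Real.pi * |x| := by
      have h00 : (0:ℝ) ≤ Real.pi * |x| := by positivity
      linarith
    constructor
    · intro h
      have h2 : Real.tan (Real.pi * |x|) ≤ Real.pi * y / 2 := by
        rw [div_mul_eq_mul_div, div_le_iff₀ hπ] at h
        linarith
      have := Real.arctan_strictMono.monotone h2
      rw [Real.arctan_tan h0 h1] at this
      rw [hc, le_div_iff₀ hπ]
      linarith
    · intro h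
      have h2 : Real.pi * |x| ≤ arctan (Real.pi * y / 2) := by
        rw [hc, le_div_iff₀ hπ] at h
        linarith
      have h3 : Real.tan (Real.pi * |x|) ≤ Real.pi * y / 2 := by
        rcases eq_or_lt_of_le h2 with he | hlt
        · rw [he, Real.tan_arctan]
        · have := Real.strictMonoOn_tan (a := Real.pi * |x|) (b := arctan (Real.pi * y / 2))
            ⟨h0, h1⟩ ⟨by have := (show (0:ℝ) < arctan (Real.pi * y / 2) by rw [← Real.arctan_zero]; exact Real.arctan_strictMono (by positivity)); linarith, Real.arctan_lt_pi_div_two _⟩ hlt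
          rw [Real.tan_arctan] at this
          exact this.le
      rw [div_mul_eq_mul_div, div_le_iff₀ hπ]
      linarith
  ext x
  simp only [Hset, mem_setOf_eq, mem_Icc, ← abs_le]
  constructor
  · rintro ⟨-, hx, h⟩
    exact ((key x hx).mp h)
  · intro h
    have hx : |x| < 1/2 := lt_of_le_of_lt h hchalf
    exact ⟨hy, hx, (key x hx).mpr h⟩

lemma symmDiff_Icc_le (a b u w : ℝ) (huw : u ≤ w) :
    volume (symmDiff (Icc (u + a) (u + b)) (Icc (w + a) (w + b))) ≤ ENNReal.ofReal (2 * |u - w|) := by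
  have hsub : symmDiff (Icc (u + a) (u + b)) (Icc (w + a) (w + b)) ⊆
      Icc (u + a) (w + a) ∪ Icc (u + b) (w + b) := by
    intro x hx
    rw [Set.mem_symmDiff] at hx
    rcases hx with ⟨⟨h1, h2⟩, h3⟩ | ⟨⟨h1, h2⟩, h3⟩
    · left
      rw [mem_Icc] at h3 ⊢
      refine ⟨h1, ?_⟩
      by_contra hcon
      push_neg at hcon
      exact h3 ⟨hcon.le, by linarith⟩
    · right
      rw [mem_Icc] at h3 ⊢
      refine ⟨?_, h2⟩
      by_contra hcon
      push_neg at hcon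
      exact h3 ⟨by linarith, hcon.le⟩
  calc volume (symmDiff (Icc (u + a) (u + b)) (Icc (w + a) (w + b)))
      ≤ volume (Icc (u + a) (w + a) ∪ Icc (u + b) (w + b)) := measure_mono hsub
    _ ≤ volume (Icc (u + a) (w + a)) + volume (Icc (u + b) (w + b)) := measure_union_le _ _
    _ = ENNReal.ofReal (w - u) + ENNReal.ofReal (w - u) := by
        rw [Real.volume_Icc, Real.volume_Icc]; ring_nf
    _ = ENNReal.ofReal (2 * |u - w|) := by
        rw [abs_sub_comm, abs_of_nonneg (by linarith), two_mul, ENNReal.ofReal_add (by linarith) (by linarith)]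

lemma symmDiff_Icc_le' (a b u w : ℝ) :
    volume (symmDiff (Icc (u + a) (u + b)) (Icc (w + a) (w + b))) ≤ ENNReal.ofReal (2 * |u - w|) := by
  rcases le_total u w with h | h
  · exact symmDiff_Icc_le a b u w h
  · rw [symmDiff_comm, abs_sub_comm]
    exact symmDiff_Icc_le a b w u h

lemma htrans_preimage (s : ℝ) (A : Set (ℝ × ℝ)) :
    htrans s A = (fun p : ℝ × ℝ => (p.1 - s, p.2)) ⁻¹' A := by
  ext ⟨x, y⟩
  simp only [htrans, Set.mem_image, Set.mem_preimage, Prod.ext_iff]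
  constructor
  · rintro ⟨⟨a, b⟩, hab, h1, h2⟩
    simp only at h1 h2
    subst h1; subst h2
    simpa using hab
  · intro h
    exact ⟨(x - s, y), h, by simp, rfl⟩

lemma slice_symmDiff (P Q : Set (ℝ × ℝ)) (y : ℝ) :
    {x : ℝ | (x, y) ∈ symmDiff P Q} = symmDiff {x : ℝ | (x, y) ∈ P} {x : ℝ | (x, y) ∈ Q} := by
  ext x
  simp [Set.mem_symmDiff]

lemma lint_inv_sq (r : ℝ) (hr : 0 < r) :
    (∫⁻ y in Ici r, ENNReal.ofReal (1 / y ^ 2)) = ENNReal.ofReal (1 / r) := by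
  rw [show (volume.restrict (Ici r)) = volume.restrict (Ioi r) from
    Measure.restrict_congr_set Ioi_ae_eq_Ici.symm]
  have h2 : ∀ᵐ y ∂(volume : Measure ℝ), y ∈ Ioi r →
      ENNReal.ofReal (1 / y ^ 2) = ENNReal.ofReal (y ^ (-2 : ℝ)) := by
    apply ae_of_all
    intro y hy
    have h0 : 0 < y := hr.trans hy
    rw [Real.rpow_neg h0.le, show ((2:ℝ)) = ((2:ℕ):ℝ) by norm_num, Real.rpow_natCast, one_div]
  rw [setLIntegral_congr_fun_ae measurableSet_Ioi h2,
    ← ofReal_integral_eq_lintegral_ofReal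
      (integrableOn_Ioi_rpow_of_lt (by norm_num) hr)
      ((ae_restrict_iff' measurableSet_Ioi).mpr
        (ae_of_all _ fun y hy => Real.rpow_nonneg (hr.trans hy).le _)),
    integral_Ioi_rpow_of_lt (by norm_num) hr]
  norm_num [Real.rpow_neg_one]

theorem stmt5 (r : ℝ) (hr : 0 < r) (u w : ℝ) :
    hypMeasure
        (symmDiff (htrans u (Hset ∩ {p | r ≤ p.2})) (htrans w (Hset ∩ {p | r ≤ p.2}))) ≤
      ENNReal.ofReal (2 * |u - w| / r) := by
  set A : Set (ℝ × ℝ) := Hset ∩ {p | r ≤ p.2} with hA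
  set c : ℝ → ℝ := fun y => arctan (Real.pi * y / 2) / Real.pi with hcdef
  have hAm : MeasurableSet A :=
    measurableSet_Hset.inter (measurableSet_le measurable_const measurable_snd)
  have hmap : ∀ s : ℝ, Measurable (fun p : ℝ × ℝ => (p.1 - s, p.2)) := fun s =>
    (measurable_fst.sub_const s).prodMk measurable_snd
  have hSm : ∀ s : ℝ, MeasurableSet (htrans s A) := fun s => by
    rw [htrans_preimage]; exact hAm.preimage (hmap s)
  set S := symmDiff (htrans u A) (htrans w A) with hSdef
  have hS : MeasurableSet S := (hSm u).symmDiff (hSm w)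
  -- slice description
  have hsl : ∀ s y : ℝ, {x : ℝ | (x, y) ∈ htrans s A} =
      if r ≤ y then Icc (s + -(c y)) (s + c y) else (∅ : Set ℝ) := by
    intro s y
    have : {x : ℝ | (x, y) ∈ htrans s A} = {x : ℝ | (x - s, y) ∈ A} := by
      rw [htrans_preimage]; rfl
    rw [this]
    split_ifs with hy
    · have h0 : 0 < y := lt_of_lt_of_le hr hy
      have hH : {x : ℝ | (x, y) ∈ Hset} = Icc (-(c y)) (c y) := Hslice h0
      ext x
      simp only [hA, mem_setOf_eq, Set.mem_inter_iff, mem_Icc]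
      constructor
      · rintro ⟨h1, -⟩
        have : x - s ∈ Icc (-(c y)) (c y) := by rw [← hH]; exact h1
        rw [mem_Icc] at this
        constructor <;> linarith [this.1, this.2]
      · intro ⟨h1, h2⟩
        refine ⟨?_, hy⟩
        have : x - s ∈ Icc (-(c y)) (c y) := by rw [mem_Icc]; constructor <;> linarith
        rw [← hH] at this
        exact this
    · ext x
      simp only [hA, mem_setOf_eq, Set.mem_inter_iff, Set.mem_empty_iff_false, iff_false]
      rintro ⟨-, h2⟩
      exact hy h2
  have hslS : ∀ y : ℝ, {x : ℝ | (x, y) ∈ S} =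
      if r ≤ y then symmDiff (Icc (u + -(c y)) (u + c y)) (Icc (w + -(c y)) (w + c y))
      else (∅ : Set ℝ) := by
    intro y
    rw [hSdef, slice_symmDiff, hsl u y, hsl w y]
    split_ifs with hy
    · rfl
    · simp [symmDiff]
  -- the density function
  set g : ℝ × ℝ → ENNReal := fun p => ENNReal.ofReal (1 / p.2 ^ 2) with hg
  have hgm : Measurable g := by
    apply Measurable.ennreal_ofReal
    exact (measurable_const.div ((measurable_snd).pow_const 2))
  have key : hypMeasure S = ∫⁻ y : ℝ, ∫⁻ x : ℝ, S.indicator g (x, y) := by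
    rw [hypMeasure, withDensity_apply _ hS, ← lintegral_indicator hS, Measure.volume_eq_prod,
      lintegral_prod_symm _ (hgm.indicator hS).aemeasurable]
  rw [key]
  have inner_bound : ∀ y : ℝ, (∫⁻ x : ℝ, S.indicator g (x, y)) ≤
      (Ici r).indicator (fun y => ENNReal.ofReal (1 / y ^ 2) * ENNReal.ofReal (2 * |u - w|)) y := by
    intro y
    have hfun : (fun x : ℝ => S.indicator g (x, y)) =
        ({x : ℝ | (x, y) ∈ S}).indicator (fun _ => ENNReal.ofReal (1 / y ^ 2)) := by
      funext x
      by_cases hx : (x, y) ∈ S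
      · rw [Set.indicator_of_mem hx]
        exact (Set.indicator_of_mem (show x ∈ {x : ℝ | (x, y) ∈ S} from hx)
          (fun _ => ENNReal.ofReal (1 / y ^ 2))).symm
      · rw [Set.indicator_of_notMem hx]
        exact (Set.indicator_of_notMem (show x ∉ {x : ℝ | (x, y) ∈ S} from hx)
          (fun _ => ENNReal.ofReal (1 / y ^ 2))).symm
    rw [hfun]
    by_cases hy : r ≤ y
    · have hms : MeasurableSet {x : ℝ | (x, y) ∈ S} := by
        rw [hslS y, if_pos hy]
        exact (measurableSet_Icc.symmDiff measurableSet_Icc)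
      rw [lintegral_indicator hms, setLIntegral_const, Set.indicator_of_mem (show y ∈ Ici r from hy)]
      apply mul_le_mul_right
      rw [hslS y, if_pos hy]
      exact symmDiff_Icc_le' (-(c y)) (c y) u w
    · rw [hslS y, if_neg hy]
      simp [Set.indicator_of_notMem (show y ∉ Ici r from hy)]
  calc (∫⁻ y : ℝ, ∫⁻ x : ℝ, S.indicator g (x, y))
      ≤ ∫⁻ y : ℝ, (Ici r).indicator
          (fun y => ENNReal.ofReal (1 / y ^ 2) * ENNReal.ofReal (2 * |u - w|)) y :=
        lintegral_mono inner_bound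
    _ = ∫⁻ y in Ici r, ENNReal.ofReal (1 / y ^ 2) * ENNReal.ofReal (2 * |u - w|) := by
        rw [lintegral_indicator measurableSet_Ici]
    _ = (∫⁻ y in Ici r, ENNReal.ofReal (1 / y ^ 2)) * ENNReal.ofReal (2 * |u - w|) := by
        rw [lintegral_mul_const _ (by measurability)]
    _ ≤ ENNReal.ofReal (1 / r) * ENNReal.ofReal (2 * |u - w|) := by
        gcongr
        exact le_of_eq (lint_inv_sq r hr)
    _ = ENNReal.ofReal (2 * |u - w| / r) := by
        rw [← ENNReal.ofReal_mul (by positivity)]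
        congr 1
        ring
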